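/- Well-posedness of the optimization-based AtC formulation: under Assumptions A and B there exist constants L₀ and N₀, depending only on k1, k2, c₁, p and γ, such that whenever L ≥ L₀ and N ≥ N₀, for every load f the constrained problem — minimize ½ Σ_{i=K}^{L} (uᵃ_i − uᶜ_i)² over pairs of functions uᵃ : {0,…,L} → ℝ and uᶜ : {K,…,N̄} → ℝ satisfying (A uᵃ)_i = f_i for 2 ≤ i ≤ L−2 with uᵃ_0 = uᵃ_1 = 0, and (C uᶜ)_i = f_i for K+1 ≤ i ≤ N−2 with uᶜ_{N̄} = 0 — admits a minimizer, and any two minimizing pairs coincide. -/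

import Mathlib

namespace AtC

noncomputable def solA (k1 k2 : ℝ) (f : ℤ → ℝ) : ℕ → ℝ
  | 0 => 0
  | 1 => 0
  | 2 => 0
  | 3 => 0
  | (n+4) => -(f (n+2) + k1 * (solA k1 k2 f (n+1) - 2*solA k1 k2 f (n+2) + solA k1 k2 f (n+3))
      + k2 * (solA k1 k2 f n - 2*solA k1 k2 f (n+2)))/k2

lemma exists_A (k1 k2 : ℝ) (hk2 : k2 ≠ 0) (L : ℤ) (f : ℤ → ℝ) :
    ∃ u : ℤ → ℝ, (∀ i, 2 ≤ i → i ≤ L - 2 →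
      -k1 * (u (i - 1) - 2 * u i + u (i + 1))
        - k2 * (u (i - 2) - 2 * u i + u (i + 2)) = f i) ∧ u 0 = 0 ∧ u 1 = 0 := by
  refine ⟨fun i => if 0 ≤ i then solA k1 k2 f i.toNat else 0, ?_, by norm_num [solA], by norm_num [solA]⟩
  intro i h2 _
  have hn : ∃ n : ℕ, i - 2 = (n : ℤ) := ⟨(i-2).toNat, by omega⟩
  obtain ⟨n, e0⟩ := hn
  have e0' : (i-2).toNat = n := by omega
  have e1 : (i-1).toNat = n + 1 := by omega
  have e2 : i.toNat = n + 2 := by omega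
  have e3 : (i+1).toNat = n + 3 := by omega
  have e4 : (i+2).toNat = n + 4 := by omega
  simp only [if_pos (by omega : (0:ℤ) ≤ i - 2), if_pos (by omega : (0:ℤ) ≤ i - 1),
    if_pos (by omega : (0:ℤ) ≤ i), if_pos (by omega : (0:ℤ) ≤ i + 1),
    if_pos (by omega : (0:ℤ) ≤ i + 2), e0', e1, e2, e3, e4]
  have hdef : solA k1 k2 f (n+4) = -(f ((n:ℤ)+2) + k1 * (solA k1 k2 f (n+1) - 2*solA k1 k2 f (n+2) + solA k1 k2 f (n+3))
      + k2 * (solA k1 k2 f n - 2*solA k1 k2 f (n+2))) / k2 := by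
    simp [solA]
  rw [hdef, show (n:ℤ) + 2 = i by omega]
  field_simp
  ring

noncomputable def solC (kc : ℝ) (N : ℤ) (f : ℤ → ℝ) : ℕ → ℝ
  | 0 => 0
  | 1 => 0
  | (m+2) => 2 * solC kc N f (m+1) - solC kc N f m - f (N-2-m)/kc

lemma exists_C (kc : ℝ) (hkc : kc ≠ 0) (K N : ℤ) (f : ℤ → ℝ) :
    ∃ u : ℤ → ℝ, (∀ i, K + 1 ≤ i → i ≤ N - 2 →
      -kc * (u (i - 1) - 2 * u i + u (i + 1)) = f i) ∧ u (N - 1) = 0 := by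
  refine ⟨fun j => if j ≤ N - 1 then solC kc N f (N-1-j).toNat else 0, ?_, by norm_num [solC]⟩
  intro i _ hiN
  have hm : ∃ m : ℕ, N - 2 - i = (m : ℤ) := ⟨(N-2-i).toNat, by omega⟩
  obtain ⟨m, hm⟩ := hm
  have e0 : (N-1-(i+1)).toNat = m := by omega
  have e1 : (N-1-i).toNat = m + 1 := by omega
  have e2 : (N-1-(i-1)).toNat = m + 2 := by omega
  simp only [if_pos (by omega : i - 1 ≤ N - 1), if_pos (by omega : i ≤ N - 1),
    if_pos (by omega : i + 1 ≤ N - 1), e0, e1, e2]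
  have hdef : solC kc N f (m+2) = 2 * solC kc N f (m+1) - solC kc N f m - f (N-2-(m:ℤ))/kc := by
    simp [solC]
  rw [hdef, show N - 2 - (m:ℤ) = i by omega]
  field_simp
  ring

end AtC

namespace AtC

/-- downward propagation of vanishing for the homogeneous atomistic recurrence -/
lemma prop_down (k1 k2 : ℝ) (hk2 : k2 ≠ 0) (K L : ℤ) (hKL : K + 3 ≤ L) (w : ℤ → ℝ)
    (heq : ∀ i, 2 ≤ i → i ≤ L - 2 →
      -k1 * (w (i - 1) - 2 * w i + w (i + 1))
        - k2 * (w (i - 2) - 2 * w i + w (i + 2)) = 0)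
    (h0 : ∀ i, K ≤ i → i ≤ L → w i = 0) :
    ∀ i, 0 ≤ i → i ≤ L → w i = 0 := by
  have key : ∀ m : ℕ, ∀ i, 0 ≤ i → K - m ≤ i → i ≤ L → w i = 0 := by
    intro m
    induction m with
    | zero => intro i _ h1 h2; exact h0 i (by omega) h2
    | succ m ih =>
      intro i hi0 h1 h2
      by_cases hc : K - m ≤ i
      · exact ih i hi0 hc h2
      · have hie : i = K - m - 1 := by omega
        have h3 := heq (i + 2) (by omega) (by omega)
        have z1 : w (i + 1) = 0 := ih (i+1) (by omega) (by omega) (by omega)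
        have z2 : w (i + 2) = 0 := ih (i+2) (by omega) (by omega) (by omega)
        have z3 : w (i + 3) = 0 := ih (i+3) (by omega) (by omega) (by omega)
        have z4 : w (i + 4) = 0 := ih (i+4) (by omega) (by omega) (by omega)
        rw [show i + 2 - 1 = i + 1 by ring, show i + 2 - 2 = i by ring,
          show i + 2 + 1 = i + 3 by ring, show i + 2 + 2 = i + 4 by ring,
          z1, z2, z3, z4] at h3
        have : -k2 * w i = 0 := by linarith
        have := mul_eq_zero.mp this
        rcases this with h | h
        · exact absurd h (by simpa using hk2)
        · exact h
  intro i hi0 hiL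
  exact key K.toNat i hi0 (by omega) hiL

/-- a solution of the homogeneous continuum equation is affine -/
lemma c_linear (kc : ℝ) (hkc : kc ≠ 0) (K N : ℤ) (v : ℤ → ℝ)
    (heq : ∀ i, K + 1 ≤ i → i ≤ N - 2 →
      -kc * (v (i - 1) - 2 * v i + v (i + 1)) = 0) :
    ∀ i, K ≤ i → i ≤ N - 1 → v i = v K + ((i : ℝ) - (K : ℝ)) * (v (K+1) - v K) := by
  have key : ∀ m : ℕ, K + m ≤ N - 1 → v (K + m) = v K + (m : ℝ) * (v (K+1) - v K) := by
    intro m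
    induction m using Nat.strong_induction_on with
    | _ m ih =>
      match m with
      | 0 => intro _; simp
      | 1 =>
        intro _
        rw [show (K + (1:ℕ) : ℤ) = K + 1 by push_cast; ring]
        push_cast; ring
      | (m+2) =>
        intro hle
        have h3 := heq (K + m + 1) (by omega) (by omega)
        have hv1 : v (K + m) = v K + (m : ℝ) * (v (K+1) - v K) := ih m (by omega) (by omega)
        have hv2 : v (K + (m+1) : ℤ) = v K + ((m:ℝ) + 1) * (v (K+1) - v K) := by
          have := ih (m+1) (by omega) (by omega)
          rw [show (K + (m+1:ℕ) : ℤ) = K + (m:ℤ) + 1 by push_cast; ring] at this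
          rw [show (K + (m+1) : ℤ) = K + (m:ℤ) + 1 by ring]
          rw [this]; push_cast; ring
        have hkc' : v (K + m + 1 - 1) - 2 * v (K + m + 1) + v (K + m + 1 + 1) = 0 := by
          rcases mul_eq_zero.mp h3 with h | h
          · exact absurd h (by simpa using hkc)
          · exact h
        rw [show K + (m:ℤ) + 1 - 1 = K + m by ring] at hkc'
        rw [show (K + (m+2:ℕ) : ℤ) = K + (m:ℤ) + 1 + 1 by push_cast; ring]
        rw [show (K + (m:ℤ) + 1) = (K + (m+1) : ℤ) by ring] at hkc'
        rw [show (K + (m+1) : ℤ) + 1 = K + (m:ℤ) + 1 + 1 by ring] at hkc'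
        have : v (K + (m:ℤ) + 1 + 1) = 2 * v (K + (m+1):ℤ) - v (K + m) := by linarith
        rw [this, hv1, hv2]; push_cast; ring
  intro i hKi hiN
  have hm : ∃ m : ℕ, i = K + m := ⟨(i - K).toNat, by omega⟩
  obtain ⟨m, rfl⟩ := hm
  have := key m (by omega)
  rw [this]; push_cast; ring

/-- core uniqueness: a homogeneous pair agreeing on the overlap vanishes -/
lemma hom_unique (k1 k2 kc : ℝ) (hk2 : k2 ≠ 0) (hkc : kc ≠ 0) (N K L : ℤ)
    (hK : 1 ≤ K) (hKL : K + 3 ≤ L) (hLN : L ≤ N - 1)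
    (va vc : ℤ → ℝ)
    (ha : ∀ i, 2 ≤ i → i ≤ L - 2 →
      -k1 * (va (i - 1) - 2 * va i + va (i + 1))
        - k2 * (va (i - 2) - 2 * va i + va (i + 2)) = 0)
    (ha0 : va 0 = 0) (ha1 : va 1 = 0)
    (hc : ∀ i, K + 1 ≤ i → i ≤ N - 2 →
      -kc * (vc (i - 1) - 2 * vc i + vc (i + 1)) = 0)
    (hcN : vc (N - 1) = 0)
    (hagree : ∀ i, K ≤ i → i ≤ L → va i = vc i) :
    (∀ i, 0 ≤ i → i ≤ L → va i = 0) ∧ (∀ i, K ≤ i → i ≤ N - 1 → vc i = 0) := by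
  set s : ℝ := vc (K+1) - vc K with hs
  set ℓ : ℤ → ℝ := fun i => vc K + ((i:ℝ) - (K:ℝ)) * s with hℓ
  have hlin := c_linear kc hkc K N vc hc
  -- w := va - ℓ satisfies the homogeneous atomistic equation
  set w : ℤ → ℝ := fun i => va i - ℓ i with hw
  have hweq : ∀ i, 2 ≤ i → i ≤ L - 2 →
      -k1 * (w (i - 1) - 2 * w i + w (i + 1))
        - k2 * (w (i - 2) - 2 * w i + w (i + 2)) = 0 := by
    intro i h1 h2
    have := ha i h1 h2
    simp only [hw, hℓ]
    push_cast
    linear_combination this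
  have hw0 : ∀ i, K ≤ i → i ≤ L → w i = 0 := by
    intro i h1 h2
    simp only [hw, hℓ]
    rw [hagree i h1 h2, hlin i h1 (by omega), hs]; ring
  have hwall := prop_down k1 k2 hk2 K L hKL w hweq hw0
  have hℓ0 : ℓ 0 = 0 := by have := hwall 0 le_rfl (by omega); simp only [hw] at this; linarith
  have hℓ1 : ℓ 1 = 0 := by have := hwall 1 (by omega) (by omega); simp only [hw] at this; linarith
  simp only [hℓ] at hℓ0 hℓ1
  push_cast at hℓ0 hℓ1
  have hs0 : s = 0 := by linarith
  have hvK : vc K = 0 := by rw [hs0] at hℓ0; linarith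
  have hℓz : ∀ i : ℤ, ℓ i = 0 := by intro i; simp only [hℓ, hs0, hvK]; ring
  constructor
  · intro i h1 h2
    have := hwall i h1 h2
    simp only [hw] at this
    rw [hℓz i] at this; linarith
  · intro i h1 h2
    rw [hlin i h1 h2, ← hs, hvK, hs0]; ring

end AtC

set_option maxHeartbeats 1000000 in
/-- well-posedness of the optimization-based AtC formulation:
the constrained minimization problem admits a minimizer and any two minimizing
pairs coincide (on the respective subdomains). -/
theorem atc_well_posedness (k1 k2 c₁ p γ : ℝ)
    (hk1 : 0 < k1) (hk2 : k2 < 0) (hk : 0 < k1 + 4 * k2)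
    (hc₁ : 0 < c₁) (hp : 1 < p) (hγ1 : γ < 1) :
    ∃ (L₀ N₀ : ℤ),
      ∀ (N K L : ℤ),
        5 ≤ N → 0 < K → K < L → L ≤ N - 1 → 4 ≤ L →
        L₀ ≤ L → N₀ ≤ N →
        -- Assumption A
        (L : ℝ) ≤ c₁ * (N : ℝ) ^ (1 / p) →
        -- Assumption B
        3 / (L : ℝ) < γ →
        (L : ℝ) - (K : ℝ) = γ * (L : ℝ) →
        ∀ f : ℤ → ℝ,
        -- existence of a minimizer
        (∃ ua uc : ℤ → ℝ,
          ((∀ i, 2 ≤ i → i ≤ L - 2 →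
            -k1 * (ua (i - 1) - 2 * ua i + ua (i + 1))
              - k2 * (ua (i - 2) - 2 * ua i + ua (i + 2)) = f i) ∧
          ua 0 = 0 ∧ ua 1 = 0 ∧
          (∀ i, K + 1 ≤ i → i ≤ N - 2 →
            -(k1 + 4 * k2) * (uc (i - 1) - 2 * uc i + uc (i + 1)) = f i) ∧
          uc (N - 1) = 0) ∧
          (∀ wa wc : ℤ → ℝ,
            (∀ i, 2 ≤ i → i ≤ L - 2 →
              -k1 * (wa (i - 1) - 2 * wa i + wa (i + 1))
                - k2 * (wa (i - 2) - 2 * wa i + wa (i + 2)) = f i) →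
            wa 0 = 0 → wa 1 = 0 →
            (∀ i, K + 1 ≤ i → i ≤ N - 2 →
              -(k1 + 4 * k2) * (wc (i - 1) - 2 * wc i + wc (i + 1)) = f i) →
            wc (N - 1) = 0 →
            (1 / 2) * ∑ i ∈ Finset.Icc K L, (ua i - uc i) ^ 2 ≤
              (1 / 2) * ∑ i ∈ Finset.Icc K L, (wa i - wc i) ^ 2)) ∧
        -- uniqueness: any two minimizing pairs coincide
        (∀ ua uc ua' uc' : ℤ → ℝ,
          -- (ua, uc) is a minimizing pair
          ((∀ i, 2 ≤ i → i ≤ L - 2 →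
            -k1 * (ua (i - 1) - 2 * ua i + ua (i + 1))
              - k2 * (ua (i - 2) - 2 * ua i + ua (i + 2)) = f i) ∧
          ua 0 = 0 ∧ ua 1 = 0 ∧
          (∀ i, K + 1 ≤ i → i ≤ N - 2 →
            -(k1 + 4 * k2) * (uc (i - 1) - 2 * uc i + uc (i + 1)) = f i) ∧
          uc (N - 1) = 0) →
          (∀ wa wc : ℤ → ℝ,
            (∀ i, 2 ≤ i → i ≤ L - 2 →
              -k1 * (wa (i - 1) - 2 * wa i + wa (i + 1))
                - k2 * (wa (i - 2) - 2 * wa i + wa (i + 2)) = f i) →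
            wa 0 = 0 → wa 1 = 0 →
            (∀ i, K + 1 ≤ i → i ≤ N - 2 →
              -(k1 + 4 * k2) * (wc (i - 1) - 2 * wc i + wc (i + 1)) = f i) →
            wc (N - 1) = 0 →
            (1 / 2) * ∑ i ∈ Finset.Icc K L, (ua i - uc i) ^ 2 ≤
              (1 / 2) * ∑ i ∈ Finset.Icc K L, (wa i - wc i) ^ 2) →
          -- (ua', uc') is a minimizing pair
          ((∀ i, 2 ≤ i → i ≤ L - 2 →
            -k1 * (ua' (i - 1) - 2 * ua' i + ua' (i + 1))
              - k2 * (ua' (i - 2) - 2 * ua' i + ua' (i + 2)) = f i) ∧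
          ua' 0 = 0 ∧ ua' 1 = 0 ∧
          (∀ i, K + 1 ≤ i → i ≤ N - 2 →
            -(k1 + 4 * k2) * (uc' (i - 1) - 2 * uc' i + uc' (i + 1)) = f i) ∧
          uc' (N - 1) = 0) →
          (∀ wa wc : ℤ → ℝ,
            (∀ i, 2 ≤ i → i ≤ L - 2 →
              -k1 * (wa (i - 1) - 2 * wa i + wa (i + 1))
                - k2 * (wa (i - 2) - 2 * wa i + wa (i + 2)) = f i) →
            wa 0 = 0 → wa 1 = 0 →
            (∀ i, K + 1 ≤ i → i ≤ N - 2 →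
              -(k1 + 4 * k2) * (wc (i - 1) - 2 * wc i + wc (i + 1)) = f i) →
            wc (N - 1) = 0 →
            (1 / 2) * ∑ i ∈ Finset.Icc K L, (ua' i - uc' i) ^ 2 ≤
              (1 / 2) * ∑ i ∈ Finset.Icc K L, (wa i - wc i) ^ 2) →
          -- then they coincide on the respective subdomains
          (∀ i, 0 ≤ i → i ≤ L → ua i = ua' i) ∧
          (∀ i, K ≤ i → i ≤ N - 1 → uc i = uc' i)) := by
  refine ⟨0, 0, ?_⟩
  intro N K L hN5 hK0 hKL' hLN hL4 _ _ _ hγL hB f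
  set kc : ℝ := k1 + 4 * k2 with hkc
  have hk2' : k2 ≠ 0 := ne_of_lt hk2
  have hkc' : kc ≠ 0 := ne_of_gt hk
  have hK1 : 1 ≤ K := hK0
  have hL0 : (0:ℝ) < (L:ℝ) := by exact_mod_cast (by omega : (0:ℤ) < L)
  have hKL3 : K + 3 ≤ L := by
    have h3 : (3:ℝ) < γ * L := (div_lt_iff₀ hL0).mp hγL
    rw [← hB] at h3
    have : (K:ℝ) + 3 < (L:ℝ) := by linarith
    exact_mod_cast (by push_cast; linarith : ((K + 3 : ℤ) : ℝ) < (L:ℝ)).le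
  -- the residual space
  set ι := {x // x ∈ Finset.Icc K L} with hι
  let E := EuclideanSpace ℝ ι
  let res : (ℤ → ℝ) → (ℤ → ℝ) → E := fun ua uc => WithLp.toLp 2 (fun i : ι => ua i.1 - uc i.1)
  -- admissibility predicates
  set AdmA : (ℤ → ℝ) → Prop := fun u =>
    (∀ i, 2 ≤ i → i ≤ L - 2 →
      -k1 * (u (i - 1) - 2 * u i + u (i + 1))
        - k2 * (u (i - 2) - 2 * u i + u (i + 2)) = f i) ∧ u 0 = 0 ∧ u 1 = 0 with hAdmA
  set AdmC : (ℤ → ℝ) → Prop := fun u =>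
    (∀ i, K + 1 ≤ i → i ≤ N - 2 →
      -kc * (u (i - 1) - 2 * u i + u (i + 1)) = f i) ∧ u (N - 1) = 0 with hAdmC
  set HomA : (ℤ → ℝ) → Prop := fun u =>
    (∀ i, 2 ≤ i → i ≤ L - 2 →
      -k1 * (u (i - 1) - 2 * u i + u (i + 1))
        - k2 * (u (i - 2) - 2 * u i + u (i + 2)) = 0) ∧ u 0 = 0 ∧ u 1 = 0 with hHomA
  set HomC : (ℤ → ℝ) → Prop := fun u =>
    (∀ i, K + 1 ≤ i → i ≤ N - 2 →
      -kc * (u (i - 1) - 2 * u i + u (i + 1)) = 0) ∧ u (N - 1) = 0 with hHomC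
  set D : Set E := {x | ∃ ua uc, AdmA ua ∧ AdmC uc ∧ x = res ua uc} with hD
  -- a particular admissible pair
  obtain ⟨ua₀, ha₀⟩ := AtC.exists_A k1 k2 hk2' L f
  obtain ⟨uc₀, hc₀⟩ := AtC.exists_C kc hkc' K N f
  have hDne : D.Nonempty := ⟨res ua₀ uc₀, ua₀, uc₀, ha₀, hc₀, rfl⟩
  set x₀ : E := res ua₀ uc₀ with hx₀
  -- the homogeneous submodule
  set V : Submodule ℝ E :=
    { carrier := {x | ∃ va vc, HomA va ∧ HomC vc ∧ x = res va vc}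
      zero_mem' := ⟨0, 0, ⟨fun i _ _ => by simp, rfl, rfl⟩, ⟨fun i _ _ => by simp, rfl⟩, by
        ext i; show (0:ℝ) = 0 - 0; ring⟩
      add_mem' := by
        rintro x y ⟨va, vc, ⟨hva, hva0, hva1⟩, ⟨hvc, hvcN⟩, rfl⟩
          ⟨wa, wc, ⟨hwa, hwa0, hwa1⟩, ⟨hwc, hwcN⟩, rfl⟩
        refine ⟨va + wa, vc + wc, ⟨fun i h1 h2 => ?_, ?_, ?_⟩, ⟨fun i h1 h2 => ?_, ?_⟩, ?_⟩
        · have := hva i h1 h2; have := hwa i h1 h2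
          simp only [Pi.add_apply]; linarith
        · simp [hva0, hwa0]
        · simp [hva1, hwa1]
        · have := hvc i h1 h2; have := hwc i h1 h2
          simp only [Pi.add_apply]; linarith
        · simp [hvcN, hwcN]
        · ext i; show (va ↑i - vc ↑i) + (wa ↑i - wc ↑i) = (va ↑i + wa ↑i) - (vc ↑i + wc ↑i); ring
      smul_mem' := by
        rintro c x ⟨va, vc, ⟨hva, hva0, hva1⟩, ⟨hvc, hvcN⟩, rfl⟩
        refine ⟨c • va, c • vc, ⟨fun i h1 h2 => ?_, ?_, ?_⟩, ⟨fun i h1 h2 => ?_, ?_⟩, ?_⟩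
        · have := hva i h1 h2
          simp only [Pi.smul_apply, smul_eq_mul]; linear_combination c * this
        · simp [hva0]
        · simp [hva1]
        · have := hvc i h1 h2
          simp only [Pi.smul_apply, smul_eq_mul]; linear_combination c * this
        · simp [hvcN]
        · ext i; show c * (va ↑i - vc ↑i) = c * va ↑i - c * vc ↑i; ring } with hV
  -- characterization of D as an affine translate of V
  have hDchar : ∀ x : E, x ∈ D ↔ x - x₀ ∈ V := by
    intro x
    constructor
    · rintro ⟨wa, wc, ⟨hwa, hwa0, hwa1⟩, ⟨hwc, hwcN⟩, rfl⟩
      refine ⟨wa - ua₀, wc - uc₀, ⟨fun i h1 h2 => ?_, ?_, ?_⟩, ⟨fun i h1 h2 => ?_, ?_⟩, ?_⟩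
      · have h1' := hwa i h1 h2; have h2' := ha₀.1 i h1 h2
        simp only [Pi.sub_apply]; linarith
      · simp [hwa0, ha₀.2.1]
      · simp [hwa1, ha₀.2.2]
      · have h1' := hwc i h1 h2; have h2' := hc₀.1 i h1 h2
        simp only [Pi.sub_apply]; linarith
      · simp [hwcN, hc₀.2]
      · ext i
        show (wa ↑i - wc ↑i) - (ua₀ ↑i - uc₀ ↑i) = (wa ↑i - ua₀ ↑i) - (wc ↑i - uc₀ ↑i)
        ring
    · rintro ⟨va, vc, ⟨hva, hva0, hva1⟩, ⟨hvc, hvcN⟩, hx⟩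
      refine ⟨ua₀ + va, uc₀ + vc, ⟨fun i h1 h2 => ?_, ?_, ?_⟩, ⟨fun i h1 h2 => ?_, ?_⟩, ?_⟩
      · have h1' := hva i h1 h2; have h2' := ha₀.1 i h1 h2
        simp only [Pi.add_apply]; linarith
      · simp [hva0, ha₀.2.1]
      · simp [hva1, ha₀.2.2]
      · have h1' := hvc i h1 h2; have h2' := hc₀.1 i h1 h2
        simp only [Pi.add_apply]; linarith
      · simp [hvcN, hc₀.2]
      · rw [show x = res va vc + x₀ from sub_eq_iff_eq_add.mp hx]
        ext i
        show (va ↑i - vc ↑i) + (ua₀ ↑i - uc₀ ↑i) = (ua₀ ↑i + va ↑i) - (uc₀ ↑i + vc ↑i)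
        ring
  have hDeq : D = (fun x : E => x - x₀) ⁻¹' (V : Set E) := by
    ext x; exact hDchar x
  have hDclosed : IsClosed D := by
    rw [hDeq]
    exact (Submodule.closed_of_finiteDimensional V).preimage (continuous_id.sub continuous_const)
  have hDconv : Convex ℝ D := by
    intro x hx y hy a b ha hb hab
    rw [hDchar] at hx hy ⊢
    have hmem := V.add_mem (V.smul_mem a hx) (V.smul_mem b hy)
    have heq : a • x + b • y - x₀ = a • (x - x₀) + b • (y - x₀) := by
      have hx0 : a • x₀ + b • x₀ = x₀ := by rw [← add_smul, hab, one_smul]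
      calc a • x + b • y - x₀ = a • x + b • y - (a • x₀ + b • x₀) := by rw [hx0]
        _ = a • (x - x₀) + b • (y - x₀) := by rw [smul_sub, smul_sub]; abel
    rw [heq]; exact hmem
  -- Hilbert projection: the minimizing vector
  obtain ⟨v, hvD, hvmin'⟩ :=
    exists_norm_eq_iInf_of_complete_convex hDne (hDclosed.isComplete) hDconv (0 : E)
  have hvmin : ∀ w ∈ D, ‖v‖ ≤ ‖w‖ := by
    intro w hw
    have hb : BddBelow (Set.range fun w : D => ‖(0:E) - ↑w‖) :=
      ⟨0, by rintro _ ⟨w', rfl⟩; positivity⟩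
    have hle := ciInf_le hb (⟨w, hw⟩ : D)
    calc ‖v‖ = ‖(0:E) - v‖ := by rw [zero_sub, norm_neg]
    _ ≤ ‖(0:E) - w‖ := by rw [hvmin']; exact hle
    _ = ‖w‖ := by rw [zero_sub, norm_neg]
  -- bridge between sums and norms
  have hnorm : ∀ (g h : ℤ → ℝ),
      ∑ i ∈ Finset.Icc K L, (g i - h i) ^ 2 = ‖res g h‖ ^ 2 := by
    intro g h
    have h1 : ‖res g h‖ ^ 2 = ∑ i : ι, ‖(res g h) i‖ ^ 2 := by
      rw [EuclideanSpace.norm_eq, Real.sq_sqrt (by positivity)]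
    rw [h1, ← Finset.sum_coe_sort (Finset.Icc K L) (fun i => (g i - h i) ^ 2)]
    apply Finset.sum_congr rfl
    intro i _
    rw [Real.norm_eq_abs, sq_abs]
  -- uniqueness of the minimizing vector
  have hminuniq : ∀ v1 ∈ D, ∀ v2 ∈ D,
      (∀ w ∈ D, ‖v1‖ ≤ ‖w‖) → (∀ w ∈ D, ‖v2‖ ≤ ‖w‖) → v1 = v2 := by
    intro v1 h1 v2 h2 m1 m2
    have hmid : (1/2:ℝ) • v1 + (1/2:ℝ) • v2 ∈ D :=
      hDconv h1 h2 (by norm_num) (by norm_num) (by norm_num)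
    set mpt : E := (1/2:ℝ) • v1 + (1/2:ℝ) • v2 with hmpt
    have hsum2 : v1 + v2 = (2:ℝ) • mpt := by
      rw [hmpt, smul_add, smul_smul, smul_smul]; norm_num
    have hnm : ‖v1 + v2‖ = 2 * ‖mpt‖ := by
      rw [hsum2, norm_smul]; simp
    have hp := parallelogram_law_with_norm ℝ v1 v2
    have a1 := m1 mpt hmid
    have a2 := m2 mpt hmid
    have e1 : ‖v1‖ * ‖v1‖ ≤ ‖mpt‖ * ‖mpt‖ := mul_self_le_mul_self (norm_nonneg v1) a1
    have e2 : ‖v2‖ * ‖v2‖ ≤ ‖mpt‖ * ‖mpt‖ := mul_self_le_mul_self (norm_nonneg v2) a2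
    rw [hnm] at hp
    have hd0 : ‖v1 - v2‖ * ‖v1 - v2‖ ≤ 0 := by nlinarith [e1, e2, hp]
    have hd : ‖v1 - v2‖ = 0 := by nlinarith [norm_nonneg (v1 - v2), hd0]
    exact sub_eq_zero.mp (norm_eq_zero.mp hd)
  -- a helper : minimality in the statement's form implies norm-minimality
  have hmin_norm : ∀ (ua uc : ℤ → ℝ),
      (∀ wa wc : ℤ → ℝ,
        (∀ i, 2 ≤ i → i ≤ L - 2 →
          -k1 * (wa (i - 1) - 2 * wa i + wa (i + 1))
            - k2 * (wa (i - 2) - 2 * wa i + wa (i + 2)) = f i) →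
        wa 0 = 0 → wa 1 = 0 →
        (∀ i, K + 1 ≤ i → i ≤ N - 2 →
          -kc * (wc (i - 1) - 2 * wc i + wc (i + 1)) = f i) →
        wc (N - 1) = 0 →
        (1 / 2) * ∑ i ∈ Finset.Icc K L, (ua i - uc i) ^ 2 ≤
          (1 / 2) * ∑ i ∈ Finset.Icc K L, (wa i - wc i) ^ 2) →
      ∀ w ∈ D, ‖res ua uc‖ ≤ ‖w‖ := by
    intro ua uc hmin w hw
    obtain ⟨wa, wc, ⟨h1, h2, h3⟩, ⟨h4, h5⟩, rfl⟩ := hw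
    have := hmin wa wc h1 h2 h3 h4 h5
    rw [hnorm ua uc, hnorm wa wc] at this
    exact (pow_le_pow_iff_left₀ (norm_nonneg _) (norm_nonneg _) two_ne_zero).mp (by linarith)
  constructor
  · -- existence of a minimizer
    obtain ⟨ua, uc, ⟨hAa, hAc, hveq⟩⟩ := hvD
    refine ⟨ua, uc, ⟨hAa.1, hAa.2.1, hAa.2.2, hAc.1, hAc.2⟩, ?_⟩
    intro wa wc h1 h2 h3 h4 h5
    have hwD : res wa wc ∈ D := ⟨wa, wc, ⟨h1, h2, h3⟩, ⟨h4, h5⟩, rfl⟩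
    have hle := hvmin _ hwD
    rw [hveq] at hle
    rw [hnorm ua uc, hnorm wa wc]
    have hsq : ‖res ua uc‖ ^ 2 ≤ ‖res wa wc‖ ^ 2 :=
      pow_le_pow_left₀ (norm_nonneg _) hle 2
    linarith
  · -- uniqueness
    intro ua uc ua' uc' hadm hmin hadm' hmin'
    have hD1 : res ua uc ∈ D :=
      ⟨ua, uc, ⟨hadm.1, hadm.2.1, hadm.2.2.1⟩, ⟨hadm.2.2.2.1, hadm.2.2.2.2⟩, rfl⟩
    have hD2 : res ua' uc' ∈ D :=
      ⟨ua', uc', ⟨hadm'.1, hadm'.2.1, hadm'.2.2.1⟩, ⟨hadm'.2.2.2.1, hadm'.2.2.2.2⟩, rfl⟩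
    have heq : res ua uc = res ua' uc' :=
      hminuniq _ hD1 _ hD2 (hmin_norm ua uc hmin) (hmin_norm ua' uc' hmin')
    set va : ℤ → ℝ := fun i => ua i - ua' i with hva
    set vc : ℤ → ℝ := fun i => uc i - uc' i with hvcdef
    have hhu := AtC.hom_unique k1 k2 kc hk2' hkc' N K L hK1 hKL3 hLN va vc
      (fun i h1 h2 => by
        have e1 := hadm.1 i h1 h2; have e2 := hadm'.1 i h1 h2
        simp only [hva]; linear_combination e1 - e2)
      (by simp [hva, hadm.2.1, hadm'.2.1])
      (by simp [hva, hadm.2.2.1, hadm'.2.2.1])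
      (fun i h1 h2 => by
        have e1 := hadm.2.2.2.1 i h1 h2; have e2 := hadm'.2.2.2.1 i h1 h2
        simp only [hvcdef]; linear_combination e1 - e2)
      (by simp [hvcdef, hadm.2.2.2.2, hadm'.2.2.2.2])
      (fun i h1 h2 => by
        have hmem : i ∈ Finset.Icc K L := Finset.mem_Icc.mpr ⟨h1, h2⟩
        have := congrArg (fun x : E => x (⟨i, hmem⟩ : ι)) heq
        have h' : ua i - uc i = ua' i - uc' i := this
        simp only [hva, hvcdef]; linarith)
    constructor
    · intro i h1 h2
      have := hhu.1 i h1 h2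
      simp only [hva] at this; linarith
    · intro i h1 h2
      have := hhu.2 i h1 h2
      simp only [hvcdef] at this; linarith
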